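/- Let X be a nontrivial complex Hilbert space, A : D(A) → X a densely defined, closable linear operator, and σ ∈ ℂ such that A − σ is injective. Suppose μ ∈ ℂ, μ ≠ 0, and (η_ν)_{ν∈ℕ} is a sequence in the range of A − σ such that there is ε > 0 with ‖η_ν‖ ≥ ε for all ν, and lim_{ν→∞} [(A − σ)^{-1} η_ν − μ η_ν] = 0. Then σ + μ^{-1} belongs to the spectrum of the closure of A. -/

import Mathlib

open Filter Topology

/-- If `A` is a densely defined closable operator in a nontrivial complex Hilbert space,
`A - σ` is injective, `μ ≠ 0`, and `(η_ν)` is a sequence in the range of `A - σ`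
(with preimages `ξ_ν`, i.e. `ξ_ν = (A - σ)⁻¹ η_ν`), bounded below in norm by `ε > 0`,
such that `(A - σ)⁻¹ η_ν - μ η_ν → 0`, then `σ + μ⁻¹` is in the spectrum of the closure
of `A`, i.e. `closure A - (σ + μ⁻¹)` is not bijective. -/
theorem stmt0 {X : Type*} [NormedAddCommGroup X] [InnerProductSpace ℂ X] [CompleteSpace X]
    [Nontrivial X]
    (A : X →ₗ.[ℂ] X) (hdense : Dense (A.domain : Set X)) (hclosable : A.IsClosable)
    (σ μ : ℂ) (hμ : μ ≠ 0)
    (hinj : Function.Injective fun x : A.domain => A x - σ • (x : X))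
    (ε : ℝ) (hε : 0 < ε)
    (η : ℕ → X) (ξ : ℕ → A.domain)
    (hran : ∀ ν, A (ξ ν) - σ • ((ξ ν : X)) = η ν)
    (hnorm : ∀ ν, ε ≤ ‖η ν‖)
    (hlim : Tendsto (fun ν => ((ξ ν : X) - μ • η ν)) atTop (𝓝 0)) :
    ¬ Function.Bijective fun x : A.closure.domain => A.closure x - (σ + μ⁻¹) • (x : X) := by
  intro hbij
  set T := A.closure with hT
  set c : ℂ := σ + μ⁻¹ with hc
  -- the graph of the closure is closed
  have hTclosed : IsClosed (T.graph : Set (X × X)) := hclosable.closure_isClosed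
  -- the map as a linear map
  set F : T.domain →ₗ[ℂ] X := T.toFun - c • T.domain.subtype with hF
  have hFapp : ∀ x : T.domain, F x = T x - c • (x : X) := fun x => rfl
  have hFbij : Function.Bijective F := hbij
  let e : T.domain ≃ₗ[ℂ] X := LinearEquiv.ofBijective F hFbij
  let g : X →ₗ[ℂ] X := T.domain.subtype.comp e.symm.toLinearMap
  have hg : ∀ x : T.domain, g (F x) = (x : X) := by
    intro x
    simp only [g, LinearMap.comp_apply, Submodule.subtype_apply]
    congr 1
    exact e.symm_apply_apply x
  -- closed graph theorem: g is continuous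
  have hgcont : Continuous g := by
    apply g.continuous_of_seq_closed_graph
    intro u x y hu hgu
    -- z n : T.domain with F (z n) = u n and g (u n) = z n
    set z : ℕ → T.domain := fun n => e.symm (u n) with hz
    have hzval : ∀ n, ((z n : X)) = g (u n) := fun n => rfl
    have hzF : ∀ n, F (z n) = u n := fun n => e.apply_symm_apply (u n)
    have hzlim : Tendsto (fun n => ((z n : X))) atTop (𝓝 y) := by
      exact hgu
    have hTzlim : Tendsto (fun n => T (z n)) atTop (𝓝 (x + c • y)) := by
      have : ∀ n, T (z n) = u n + c • ((z n : X)) := by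
        intro n
        have h := hFapp (z n)
        rw [hzF n] at h
        exact sub_eq_iff_eq_add.mp h.symm
      simp only [this]
      exact hu.add (hzlim.const_smul c)
    -- use closedness of the graph of T
    have hmem : ∀ n, ((z n : X), T (z n)) ∈ T.graph := fun n => T.mem_graph (z n)
    have hlimmem : (y, x + c • y) ∈ T.graph := by
      exact hTclosed.mem_of_tendsto (hzlim.prodMk_nhds hTzlim)
        (Eventually.of_forall hmem)
    rw [LinearPMap.mem_graph_iff] at hlimmem
    obtain ⟨w, hw1, hw2⟩ := hlimmem
    have hFw : F w = x := by
      rw [hFapp, hw2, hw1]; module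
    calc y = (w : X) := hw1.symm
    _ = g (F w) := (hg w).symm
    _ = g x := by rw [hFw]
  -- the sequence ξ lives in T.domain
  have hle := A.le_closure
  set ξ' : ℕ → T.domain := fun ν => ⟨(ξ ν : X), hle.1 (ξ ν).2⟩ with hξ'
  have hval : ∀ ν, T (ξ' ν) = A (ξ ν) := by
    intro ν
    exact (hle.2 (x := ξ ν) (y := ξ' ν) rfl).symm
  have hFξ : ∀ ν, F (ξ' ν) = -μ⁻¹ • ((ξ ν : X) - μ • η ν) := by
    intro ν
    rw [hFapp, hval ν]
    have h1 : A (ξ ν) = η ν + σ • ((ξ ν : X)) := by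
      rw [eq_add_of_sub_eq (hran ν)]
    have h2 : ((ξ' ν : X)) = (ξ ν : X) := rfl
    rw [h1, h2, hc]
    match_scalars <;> field_simp <;> ring
  have hFlim : Tendsto (fun ν => F (ξ' ν)) atTop (𝓝 0) := by
    simp only [hFξ]
    simpa using hlim.const_smul (-μ⁻¹)
  -- hence ξ ν → 0
  have hξlim : Tendsto (fun ν => ((ξ ν : X))) atTop (𝓝 0) := by
    have : Tendsto (fun ν => g (F (ξ' ν))) atTop (𝓝 (g 0)) :=
      (hgcont.tendsto 0).comp hFlim
    simpa [hg] using this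
  -- hence μ • η ν → 0
  have hηlim : Tendsto (fun ν => μ • η ν) atTop (𝓝 0) := by
    have := hξlim.sub hlim
    simpa using this
  -- contradiction with the norm lower bound
  have hnormlim : Tendsto (fun ν => ‖μ • η ν‖) atTop (𝓝 0) := by
    simpa using hηlim.norm
  have hlb : ∀ ν, ‖μ‖ * ε ≤ ‖μ • η ν‖ := by
    intro ν
    rw [norm_smul]
    exact mul_le_mul_of_nonneg_left (hnorm ν) (norm_nonneg μ)
  have hpos : 0 < ‖μ‖ * ε := mul_pos (norm_pos_iff.mpr hμ) hε
  have : ‖μ‖ * ε ≤ 0 :=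
    le_of_tendsto_of_tendsto tendsto_const_nhds hnormlim
      (Eventually.of_forall hlb)
  linarith
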